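/- arXiv:2403.11704 — 6 statements merged into one kernel-verified Lean document; each statement's English description precedes it below -/
import Mathlib

section
/- For two changepoint contrast vectors θ^(k), θ^(l) ∈ ℝ^n with changepoint locations m = b^k ≤ m' = b^l (both integers strictly between 0 and n), the inner product satisfies ⟨θ^(k), θ^(l)⟩ = b^{(k−l)/2} · sqrt((n − b^l)/(n − b^k)), and in particular ⟨θ^(k), θ^(l)⟩ ≤ b^{−|k−l|/2}. -/
private lemma key_alg (N a c : ℝ) (ha : 0 < a) (hac : a ≤ c) (hcN : c < N) :
    a * (Real.sqrt ((N - a) / (N * a)) * Real.sqrt ((N - c) / (N * c)))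
      + (c - a) * (-Real.sqrt (a / (N * (N - a))) * Real.sqrt ((N - c) / (N * c)))
      + (N - c) * (-Real.sqrt (a / (N * (N - a))) * -Real.sqrt (c / (N * (N - c))))
    = Real.sqrt (a / c) * Real.sqrt ((N - c) / (N - a)) := by
  have hc : 0 < c := ha.trans_le hac
  have hN : 0 < N := hc.trans hcN
  have hNa : 0 < N - a := by linarith
  have hNc : 0 < N - c := by linarith
  have e1 : Real.sqrt ((N - a) / (N * a)) = Real.sqrt (N - a) / (Real.sqrt N * Real.sqrt a) := by
    rw [Real.sqrt_div hNa.le, Real.sqrt_mul hN.le]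
  have e2 : Real.sqrt ((N - c) / (N * c)) = Real.sqrt (N - c) / (Real.sqrt N * Real.sqrt c) := by
    rw [Real.sqrt_div hNc.le, Real.sqrt_mul hN.le]
  have e3 : Real.sqrt (a / (N * (N - a))) = Real.sqrt a / (Real.sqrt N * Real.sqrt (N - a)) := by
    rw [Real.sqrt_div ha.le, Real.sqrt_mul hN.le]
  have e4 : Real.sqrt (c / (N * (N - c))) = Real.sqrt c / (Real.sqrt N * Real.sqrt (N - c)) := by
    rw [Real.sqrt_div hc.le, Real.sqrt_mul hN.le]
  have e5 : Real.sqrt (a / c) = Real.sqrt a / Real.sqrt c := Real.sqrt_div ha.le c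
  have e6 : Real.sqrt ((N - c) / (N - a)) = Real.sqrt (N - c) / Real.sqrt (N - a) :=
    Real.sqrt_div hNc.le _
  rw [e1, e2, e3, e4, e5, e6]
  set sN := Real.sqrt N with hsN
  set sa := Real.sqrt a with hsa
  set sc := Real.sqrt c with hsc
  set sNa := Real.sqrt (N - a) with hsNa
  set sNc := Real.sqrt (N - c) with hsNc
  have pN : 0 < sN := Real.sqrt_pos.mpr hN
  have pa : 0 < sa := Real.sqrt_pos.mpr ha
  have pc : 0 < sc := Real.sqrt_pos.mpr hc
  have pNa : 0 < sNa := Real.sqrt_pos.mpr hNa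
  have pNc : 0 < sNc := Real.sqrt_pos.mpr hNc
  have qN : sN ^ 2 = N := Real.sq_sqrt hN.le
  have qa : sa ^ 2 = a := Real.sq_sqrt ha.le
  have qc : sc ^ 2 = c := Real.sq_sqrt hc.le
  have h1 : sNa ^ 2 = sN ^ 2 - sa ^ 2 := by rw [qN, qa]; exact Real.sq_sqrt hNa.le
  have h2 : sNc ^ 2 = sN ^ 2 - sc ^ 2 := by rw [qN, qc]; exact Real.sq_sqrt hNc.le
  rw [← qN, ← qa, ← qc, ← h2]
  field_simp
  linear_combination h1

/-- For two changepoint contrast vectors `θk, θl ∈ ℝ^n` with changepoint locations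
`m = b^k ≤ m' = b^l` (integers strictly between `0` and `n`, `b > 1`), the inner
product equals `b^{(k-l)/2} √((n-b^l)/(n-b^k))`, and in particular is at most
`b^{-|k-l|/2}`. -/
theorem stmt_2 (n m m' : ℕ) (b : ℝ) (k l : ℕ) (hb : 1 < b)
    (hmk : (m : ℝ) = b ^ k) (hml : (m' : ℝ) = b ^ l)
    (hm : 1 ≤ m) (hmm : m ≤ m') (hmn : m' < n)
    (θk θl : Fin n → ℝ)
    (hθk : ∀ t : Fin n, θk t =
      if (t : ℕ) < m then Real.sqrt (((n : ℝ) - m) / (n * m))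
      else - Real.sqrt ((m : ℝ) / (n * ((n : ℝ) - m))))
    (hθl : ∀ t : Fin n, θl t =
      if (t : ℕ) < m' then Real.sqrt (((n : ℝ) - m') / (n * m'))
      else - Real.sqrt ((m' : ℝ) / (n * ((n : ℝ) - m')))) :
    ∑ t : Fin n, θk t * θl t
        = b ^ (((k : ℝ) - l) / 2) * Real.sqrt (((n : ℝ) - b ^ l) / ((n : ℝ) - b ^ k))
      ∧ ∑ t : Fin n, θk t * θl t ≤ b ^ (-(|(k : ℝ) - l|) / 2) := by
  have hb0 : (0 : ℝ) < b := lt_trans one_pos hb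
  have ha : (0 : ℝ) < m := by exact_mod_cast hm
  have hac : (m : ℝ) ≤ m' := by exact_mod_cast hmm
  have hcN : (m' : ℝ) < n := by exact_mod_cast hmn
  set N : ℝ := (n : ℝ)
  set P := Real.sqrt ((N - m) / (N * m)) with hP
  set Q := Real.sqrt ((m : ℝ) / (N * (N - m))) with hQ
  set R := Real.sqrt ((N - m') / (N * m')) with hR
  set Sv := Real.sqrt ((m' : ℝ) / (N * (N - m'))) with hSv
  -- Step 1: compute the sum
  have hsum : ∑ t : Fin n, θk t * θl t
      = (m : ℝ) * (P * R) + ((m' : ℝ) - m) * (-Q * R) + (N - m') * (-Q * -Sv) := by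
    have hfun : ∀ t : Fin n, θk t * θl t =
        (fun i : ℕ => (if i < m then P else -Q) * (if i < m' then R else -Sv)) (t : ℕ) := by
      intro t; rw [hθk, hθl]
    rw [Finset.sum_congr rfl (fun t _ => hfun t),
      Fin.sum_univ_eq_sum_range (fun i : ℕ => (if i < m then P else -Q) * (if i < m' then R else -Sv)) n,
      Finset.range_eq_Ico,
      ← Finset.sum_Ico_consecutive _ (Nat.zero_le m') hmn.le,
      ← Finset.sum_Ico_consecutive _ (Nat.zero_le m) hmm]
    have e1 : ∑ i ∈ Finset.Ico 0 m,
        (if i < m then P else -Q) * (if i < m' then R else -Sv) = (m : ℝ) * (P * R) := by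
      rw [Finset.sum_congr rfl (fun i hi => ?_), Finset.sum_const, Nat.card_Ico,
        Nat.sub_zero, nsmul_eq_mul]
      rw [Finset.mem_Ico] at hi
      rw [if_pos hi.2, if_pos (lt_of_lt_of_le hi.2 hmm)]
    have e2 : ∑ i ∈ Finset.Ico m m',
        (if i < m then P else -Q) * (if i < m' then R else -Sv)
        = ((m' : ℝ) - m) * (-Q * R) := by
      rw [Finset.sum_congr rfl (fun i hi => ?_), Finset.sum_const, Nat.card_Ico,
        nsmul_eq_mul, Nat.cast_sub hmm]
      rw [Finset.mem_Ico] at hi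
      rw [if_neg (not_lt.mpr hi.1), if_pos hi.2]
    have e3 : ∑ i ∈ Finset.Ico m' n,
        (if i < m then P else -Q) * (if i < m' then R else -Sv)
        = (N - m') * (-Q * -Sv) := by
      rw [Finset.sum_congr rfl (fun i hi => ?_), Finset.sum_const, Nat.card_Ico,
        nsmul_eq_mul, Nat.cast_sub hmn.le]
      rw [Finset.mem_Ico] at hi
      rw [if_neg (not_lt.mpr (le_trans hmm hi.1)), if_neg (not_lt.mpr hi.1)]
    rw [e1, e2, e3]
  -- Step 2: closed form
  have hkey := key_alg N (m : ℝ) (m' : ℝ) ha hac hcN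
  have hclosed : ∑ t : Fin n, θk t * θl t
      = Real.sqrt ((m : ℝ) / m') * Real.sqrt ((N - m') / (N - m)) := by
    rw [hsum, ← hkey, hP, hQ, hR, hSv]
  -- b-power rewriting
  have hbpow : b ^ (((k : ℝ) - l) / 2) = Real.sqrt ((m : ℝ) / m') := by
    rw [hmk, hml, ← Real.rpow_natCast b k, ← Real.rpow_natCast b l, ← Real.rpow_sub hb0,
      Real.sqrt_eq_rpow, ← Real.rpow_mul hb0.le, mul_one_div]
  have hkl : k ≤ l := by
    have h1 : b ^ k ≤ b ^ l := by rw [← hmk, ← hml]; exact hac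
    exact (pow_le_pow_iff_right₀ hb).mp h1
  have habs : -(|(k : ℝ) - l|) / 2 = ((k : ℝ) - l) / 2 := by
    rw [abs_of_nonpos (by simp; exact_mod_cast hkl)]
    ring
  have hfirst : ∑ t : Fin n, θk t * θl t
      = b ^ (((k : ℝ) - l) / 2) * Real.sqrt (((n : ℝ) - b ^ l) / ((n : ℝ) - b ^ k)) := by
    rw [← hmk, ← hml, hclosed, hbpow]
  refine ⟨hfirst, ?_⟩
  rw [hfirst, habs]
  have hle1 : Real.sqrt (((n : ℝ) - b ^ l) / ((n : ℝ) - b ^ k)) ≤ 1 := by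
    rw [← hmk, ← hml]
    rw [Real.sqrt_le_one, div_le_one (by linarith : (0:ℝ) < N - m)]
    linarith
  calc b ^ (((k : ℝ) - l) / 2) * Real.sqrt (((n : ℝ) - b ^ l) / ((n : ℝ) - b ^ k))
      ≤ b ^ (((k : ℝ) - l) / 2) * 1 :=
        mul_le_mul_of_nonneg_left hle1 (Real.rpow_nonneg hb0.le _)
    _ = b ^ (((k : ℝ) - l) / 2) := mul_one _
end

section
/- Let p_(1) be the minimum of n > 2 independent Uniform(0,1) random variables, and let K(x,t) = x log(x/t) + (1−x) log((1−x)/(1−t)). Then for every s > 0, P(n·K(1/n, p_(1)) > s) ≤ (1 + 9/e)·e^{−s}. -/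
open MeasureTheory ProbabilityTheory Finset

/-- Let `p₍₁₎` be the minimum of `n > 2` i.i.d. `Uniform(0,1)` random variables, and
`K(x,t) = x log(x/t) + (1-x) log((1-x)/(1-t))`. Then for every `s > 0`,
`P(n K(1/n, p₍₁₎) > s) ≤ (1 + 9/e) e^{-s}`. -/
theorem stmt_5 {Ω : Type*} [MeasurableSpace Ω] (P : Measure Ω) [IsProbabilityMeasure P]
    (n : ℕ) (hn : 2 < n) (U : Fin n → Ω → ℝ)
    (hmeas : ∀ i, Measurable (U i))
    (hindep : iIndepFun U P)
    (hunif : ∀ i, Measure.map (U i) P = volume.restrict (Set.Ioc (0:ℝ) 1))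
    (K : ℝ → ℝ → ℝ)
    (hK : ∀ x t, K x t = x * Real.log (x / t) + (1 - x) * Real.log ((1 - x) / (1 - t)))
    (s : ℝ) (hs : 0 < s) :
    P {ω | (n : ℝ) * K (1 / n) (⨅ i : Fin n, U i ω) > s}
      ≤ ENNReal.ofReal ((1 + 9 / Real.exp 1) * Real.exp (-s)) := by
  classical
  have hn3 : (3:ℝ) ≤ (n:ℝ) := by exact_mod_cast hn
  have hnpos : (0:ℝ) < (n:ℝ) := by linarith
  have hnne : (n:ℝ) ≠ 0 := ne_of_gt hnpos
  have hlog9 : 1 ≤ Real.log 9 := by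
    rw [Real.le_log_iff_exp_le (by norm_num)]
    have := Real.exp_one_lt_d9
    linarith
  by_cases hcase : s ≤ Real.log 9 - 1
  · -- RHS is at least 1
    have h9 : (1:ℝ) ≤ 9 / Real.exp 1 * Real.exp (-s) := by
      rw [div_mul_eq_mul_div, le_div_iff₀ (Real.exp_pos 1)]
      have h1 : Real.exp (1 - Real.log 9) ≤ Real.exp (-s) := by
        apply Real.exp_le_exp.mpr; linarith
      rw [Real.exp_sub, Real.exp_log (by norm_num : (0:ℝ) < 9)] at h1
      nlinarith [Real.exp_pos 1]
    have h1 : (1:ℝ) ≤ (1 + 9 / Real.exp 1) * Real.exp (-s) := by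
      have := Real.exp_pos (-s); nlinarith
    calc P {ω | (n : ℝ) * K (1 / n) (⨅ i : Fin n, U i ω) > s} ≤ 1 := prob_le_one
    _ = ENNReal.ofReal 1 := by simp
    _ ≤ _ := ENNReal.ofReal_le_ofReal h1
  · push_neg at hcase
    set a : ℝ := Real.exp (-s) / n with ha_def
    set b : ℝ := 1 - Real.exp ((Real.log 9 - 1 - s) / n) with hb_def
    have hexp1 : Real.exp ((Real.log 9 - 1 - s) / n) < 1 := by
      rw [Real.exp_lt_one_iff]
      apply div_neg_of_neg_of_pos (by linarith) hnpos
    have hbpos : 0 < b := by simp only [hb_def]; linarith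
    have hblt1 : b < 1 := by
      have := Real.exp_pos ((Real.log 9 - 1 - s) / n)
      simp only [hb_def]; linarith
    have hapos : 0 < a := div_pos (Real.exp_pos _) hnpos
    have hexps : Real.exp (-s) < 1 := by rw [Real.exp_lt_one_iff]; linarith
    have halt1 : a < 1 := by
      rw [ha_def, div_lt_one hnpos]; linarith
    -- key analytic estimate
    have hKey : ∀ t : ℝ, a ≤ t → t < b → (n:ℝ) * K (1/n) t ≤ s := by
      intro t hat htb
      have ht0 : 0 < t := lt_of_lt_of_le hapos hat
      have ht1 : t < 1 := htb.trans hblt1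
      have h1t : 0 < 1 - t := by linarith
      have hninv : (1:ℝ)/n < 1 := by rw [div_lt_one hnpos]; linarith
      have hninvpos : (0:ℝ) < 1/n := by positivity
      have hn1 : (0:ℝ) < 1 - 1/n := by linarith
      rw [hK]
      have hexpand : (n:ℝ) * (1/(n:ℝ) * Real.log (1/(n:ℝ)/t)
            + (1 - 1/(n:ℝ)) * Real.log ((1 - 1/(n:ℝ))/(1 - t)))
          = Real.log (1/(n:ℝ)/t) + ((n:ℝ) - 1) * Real.log ((1 - 1/(n:ℝ))/(1 - t)) := by
        field_simp
      rw [hexpand]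
      rcases le_or_gt t (1/(n:ℝ)) with hle | hgt
      · have h2 : ((n:ℝ) - 1) * Real.log ((1 - 1/(n:ℝ))/(1 - t)) ≤ 0 := by
          apply mul_nonpos_of_nonneg_of_nonpos (by linarith)
          apply Real.log_nonpos (by positivity)
          rw [div_le_one h1t]; linarith
        have h1 : Real.log (1/(n:ℝ)/t) ≤ s := by
          rw [Real.log_le_iff_le_exp (by positivity)]
          rw [div_le_iff₀ ht0]
          have h3 : 1/(n:ℝ) = Real.exp s * a := by
            rw [ha_def, Real.exp_neg]; field_simp
          rw [h3]
          exact mul_le_mul_of_nonneg_left hat (Real.exp_pos s).le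
        linarith
      · have hA : Real.log (1/(n:ℝ)/t) ≤ 0 := by
          apply Real.log_nonpos (by positivity)
          rw [div_le_one ht0]; linarith
        have hsplit : Real.log ((1 - 1/(n:ℝ))/(1 - t))
            = Real.log (1 - 1/(n:ℝ)) - Real.log (1 - t) :=
          Real.log_div (ne_of_gt hn1) (ne_of_gt h1t)
        have hlt : (Real.log 9 - 1 - s)/n < Real.log (1 - t) := by
          have h4 : Real.exp ((Real.log 9 - 1 - s)/n) < 1 - t := by
            simp only [hb_def] at htb; linarith
          calc (Real.log 9 - 1 - s)/n
              = Real.log (Real.exp ((Real.log 9 - 1 - s)/n)) := (Real.log_exp _).symm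
          _ < Real.log (1 - t) := Real.log_lt_log (Real.exp_pos _) h4
        have hnlog : -(n:ℝ) * Real.log (1 - t) < s + 1 - Real.log 9 := by
          have h5 := mul_lt_mul_of_pos_left hlt hnpos
          rw [mul_div_cancel₀ _ hnne] at h5
          linarith
        have hlogt : Real.log (1 - t) ≤ 0 := Real.log_nonpos (by linarith) (by linarith)
        have hlogn : Real.log (1 - 1/(n:ℝ)) ≤ 0 := Real.log_nonpos hn1.le (by linarith)
        have hprod : ((n:ℝ) - 1) * Real.log (1 - 1/(n:ℝ)) ≤ 0 :=
          mul_nonpos_of_nonneg_of_nonpos (by linarith) hlogn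
        rw [hsplit]
        nlinarith
    -- set inclusion
    have hsub : {ω | (n:ℝ) * K (1/n) (⨅ i : Fin n, U i ω) > s}
        ⊆ (⋃ i, {ω | U i ω < a}) ∪ (⋂ i, {ω | b ≤ U i ω}) := by
      intro ω hω
      simp only [Set.mem_setOf_eq] at hω
      haveI : Nonempty (Fin n) := ⟨⟨0, by omega⟩⟩
      by_cases h1 : (⨅ i, U i ω) < a
      · left
        obtain ⟨i, hi⟩ := exists_lt_of_ciInf_lt h1
        exact Set.mem_iUnion.mpr ⟨i, hi⟩
      · right
        push_neg at h1
        by_cases h2 : (⨅ i, U i ω) < b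
        · exact absurd hω (not_lt.mpr (hKey _ h1 h2))
        · push_neg at h2
          refine Set.mem_iInter.mpr fun i => ?_
          exact le_trans h2 (ciInf_le (Set.Finite.bddBelow (Set.finite_range _)) i)
    -- measure of each piece
    have hIio : ∀ i, P {ω | U i ω < a} = ENNReal.ofReal a := by
      intro i
      have he : {ω | U i ω < a} = U i ⁻¹' Set.Iio a := rfl
      rw [he, ← Measure.map_apply (hmeas i) measurableSet_Iio, hunif i,
        Measure.restrict_apply measurableSet_Iio]
      have hset : Set.Iio a ∩ Set.Ioc (0:ℝ) 1 = Set.Ioo 0 a := by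
        ext x
        simp only [Set.mem_inter_iff, Set.mem_Iio, Set.mem_Ioc, Set.mem_Ioo]
        constructor
        · rintro ⟨h1, h2, h3⟩; exact ⟨h2, h1⟩
        · rintro ⟨h1, h2⟩; exact ⟨h2, h1, by linarith⟩
      rw [hset, Real.volume_Ioo]; norm_num
    have hIci : ∀ i, P {ω | b ≤ U i ω} = ENNReal.ofReal (1 - b) := by
      intro i
      have he : {ω | b ≤ U i ω} = U i ⁻¹' Set.Ici b := rfl
      rw [he, ← Measure.map_apply (hmeas i) measurableSet_Ici, hunif i,
        Measure.restrict_apply measurableSet_Ici]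
      have hset : Set.Ici b ∩ Set.Ioc (0:ℝ) 1 = Set.Icc b 1 := by
        ext x
        simp only [Set.mem_inter_iff, Set.mem_Ici, Set.mem_Ioc, Set.mem_Icc]
        constructor
        · rintro ⟨h1, h2, h3⟩; exact ⟨h1, h3⟩
        · rintro ⟨h1, h2⟩; exact ⟨h1, by linarith, h2⟩
      rw [hset, Real.volume_Icc]
    have hA : P (⋃ i, {ω | U i ω < a}) ≤ ENNReal.ofReal (Real.exp (-s)) := by
      calc P (⋃ i, {ω | U i ω < a}) ≤ ∑' i : Fin n, P {ω | U i ω < a} :=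
            measure_iUnion_le _
      _ = ∑ i : Fin n, P {ω | U i ω < a} := tsum_fintype _
      _ = ∑ i : Fin n, ENNReal.ofReal a := by simp only [hIio]
      _ = (n : ℕ) * ENNReal.ofReal a := by
            rw [Finset.sum_const, Finset.card_univ, Fintype.card_fin, nsmul_eq_mul]
      _ = ENNReal.ofReal ((n:ℝ) * a) := by
            rw [ENNReal.ofReal_mul hnpos.le, ENNReal.ofReal_natCast]
      _ = ENNReal.ofReal (Real.exp (-s)) := by
            rw [ha_def, mul_div_cancel₀ _ hnne]
    have hB : P (⋂ i, {ω | b ≤ U i ω}) = ENNReal.ofReal (9 * Real.exp (-1 - s)) := by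
      have h := hindep.measure_inter_preimage_eq_mul Finset.univ
        (sets := fun _ => Set.Ici b) (fun i _ => measurableSet_Ici)
      have he : (⋂ i ∈ Finset.univ, U i ⁻¹' Set.Ici b) = ⋂ i, {ω | b ≤ U i ω} := by
        simp [Set.preimage, Set.mem_Ici]
      rw [he] at h
      rw [h]
      have he2 : ∀ i : Fin n, P (U i ⁻¹' Set.Ici b) = ENNReal.ofReal (1 - b) := hIci
      calc ∏ i : Fin n, P (U i ⁻¹' Set.Ici b) = ∏ _i : Fin n, ENNReal.ofReal (1 - b) := by
            simp only [he2]
      _ = (ENNReal.ofReal (1 - b)) ^ n := by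
            rw [Finset.prod_const, Finset.card_univ, Fintype.card_fin]
      _ = ENNReal.ofReal ((1 - b) ^ n) := by
            rw [← ENNReal.ofReal_pow (by linarith)]
      _ = ENNReal.ofReal (9 * Real.exp (-1 - s)) := by
            congr 1
            rw [hb_def]
            have : (1 - (1 - Real.exp ((Real.log 9 - 1 - s) / n))) ^ n
                = Real.exp ((Real.log 9 - 1 - s) / n) ^ n := by ring_nf
            rw [this, ← Real.exp_nat_mul, mul_div_cancel₀ _ hnne]
            rw [show Real.log 9 - 1 - s = Real.log 9 + (-1 - s) by ring, Real.exp_add,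
              Real.exp_log (by norm_num : (0:ℝ) < 9)]
    calc P {ω | (n:ℝ) * K (1/n) (⨅ i : Fin n, U i ω) > s}
        ≤ P ((⋃ i, {ω | U i ω < a}) ∪ (⋂ i, {ω | b ≤ U i ω})) := measure_mono hsub
    _ ≤ P (⋃ i, {ω | U i ω < a}) + P (⋂ i, {ω | b ≤ U i ω}) := measure_union_le _ _
    _ ≤ ENNReal.ofReal (Real.exp (-s)) + ENNReal.ofReal (9 * Real.exp (-1 - s)) :=
          add_le_add hA (le_of_eq hB)
    _ = ENNReal.ofReal (Real.exp (-s) + 9 * Real.exp (-1 - s)) :=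
          (ENNReal.ofReal_add (Real.exp_pos _).le (by positivity)).symm
    _ = ENNReal.ofReal ((1 + 9 / Real.exp 1) * Real.exp (-s)) := by
          congr 1
          rw [show (-1 : ℝ) - s = -s - 1 by ring, Real.exp_sub]
          field_simp
end

section
/- Let p_(j) be the j-th order statistic of n > 2 independent Uniform(0,1) random variables with 2 ≤ j ≤ n, and K(x,t) = x log(x/t) + (1−x) log((1−x)/(1−t)). Then for every s > 0, P(n·K(j/n, p_(j)) > s) ≤ e·sqrt(2)·j·e^{−(1−1/j)s}. -/
open MeasureTheory ProbabilityTheory Finset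

noncomputable def Kf (x t : ℝ) : ℝ :=
  x * Real.log (x / t) + (1 - x) * Real.log ((1 - x) / (1 - t))

lemma Kf_eq {x t : ℝ} (hx0 : 0 < x) (hx1 : x ≤ 1) (ht0 : 0 < t) (ht1 : t < 1) :
    Kf x t = (x * Real.log x + (1 - x) * Real.log (1 - x))
      - (x * Real.log t + (1 - x) * Real.log (1 - t)) := by
  unfold Kf
  rcases eq_or_lt_of_le hx1 with h1 | h1
  · subst h1
    simp [Real.log_div one_ne_zero ht0.ne']
  · rw [Real.log_div hx0.ne' ht0.ne',
      Real.log_div (by linarith : (1:ℝ) - x ≠ 0) (by linarith : (1:ℝ) - t ≠ 0)]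
    ring

lemma Kf_one {t : ℝ} (ht0 : 0 < t) : Kf 1 t = - Real.log t := by
  unfold Kf
  simp [Real.log_div one_ne_zero ht0.ne']

lemma Kf_self {x : ℝ} (hx0 : 0 < x) (hx1 : x < 1) : Kf x x = 0 := by
  unfold Kf
  rw [div_self hx0.ne', div_self (by linarith : (1:ℝ) - x ≠ 0)]
  simp

lemma hasDerivAt_G (x : ℝ) {t : ℝ} (ht0 : 0 < t) (ht1 : t < 1) :
    HasDerivAt (fun t => (x * Real.log x + (1 - x) * Real.log (1 - x))
      - (x * Real.log t + (1 - x) * Real.log (1 - t))) ((1 - x) / (1 - t) - x / t) t := by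
  have h1 : HasDerivAt (fun t : ℝ => Real.log t) t⁻¹ t := Real.hasDerivAt_log ht0.ne'
  have hsub : HasDerivAt (fun t : ℝ => 1 - t) (-1) t := (hasDerivAt_id t).const_sub 1
  have h2 : HasDerivAt (fun t : ℝ => Real.log (1 - t)) ((1 - t)⁻¹ * (-1)) t :=
    (Real.hasDerivAt_log (by linarith : (1:ℝ) - t ≠ 0)).comp t hsub
  have h3 := ((h1.const_mul x).add (h2.const_mul (1 - x))).const_sub
      (x * Real.log x + (1 - x) * Real.log (1 - x))
  refine h3.congr_deriv ?_
  ring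

lemma Kf_lt_left {x a p : ℝ} (hx1 : x ≤ 1) (ha : 0 < a) (hap : a < p) (hpx : p ≤ x) :
    Kf x p < Kf x a := by
  rcases eq_or_lt_of_le hx1 with h1 | h1
  · subst h1
    rw [Kf_one ha, Kf_one (ha.trans hap)]
    have := Real.log_lt_log ha hap
    linarith
  · have hp0 : 0 < p := ha.trans hap
    have hx0 : 0 < x := hp0.trans_le hpx
    have hp1 : p < 1 := lt_of_le_of_lt hpx h1
    have ha1 : a < 1 := hap.trans hp1
    set G := fun t => (x * Real.log x + (1 - x) * Real.log (1 - x))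
      - (x * Real.log t + (1 - x) * Real.log (1 - t)) with hG
    have hanti : StrictAntiOn G (Set.Icc a x) := by
      apply strictAntiOn_of_deriv_neg (convex_Icc a x)
      · intro t ht
        exact (hasDerivAt_G x (lt_of_lt_of_le ha ht.1)
          (lt_of_le_of_lt ht.2 h1)).continuousAt.continuousWithinAt
      · intro t ht
        rw [interior_Icc] at ht
        have ht0 : 0 < t := ha.trans ht.1
        have ht1 : t < 1 := ht.2.trans h1
        rw [(hasDerivAt_G x ht0 ht1).deriv]
        rw [sub_neg, div_lt_div_iff₀ (by linarith) ht0]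
        nlinarith [ht.2]
    have h := hanti ⟨le_refl a, (hap.trans_le hpx).le⟩ ⟨hap.le, hpx⟩ hap
    rw [show Kf x p = G p from Kf_eq hx0 hx1 hp0 hp1,
      show Kf x a = G a from Kf_eq hx0 hx1 ha ha1]
    exact h

lemma Kf_le_right {x b p : ℝ} (hx0 : 0 < x) (hxp : x ≤ p) (hpb : p ≤ b) (hb1 : b < 1) :
    Kf x p ≤ Kf x b := by
  rcases eq_or_lt_of_le hpb with h | h
  · rw [h]
  · have hp0 : 0 < p := hx0.trans_le hxp
    have hp1 : p < 1 := h.trans hb1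
    have hx1 : x ≤ 1 := hxp.trans hp1.le
    have hb0 : 0 < b := hp0.trans h
    set G := fun t => (x * Real.log x + (1 - x) * Real.log (1 - x))
      - (x * Real.log t + (1 - x) * Real.log (1 - t)) with hG
    have hmono : StrictMonoOn G (Set.Icc x b) := by
      apply strictMonoOn_of_deriv_pos (convex_Icc x b)
      · intro t ht
        exact (hasDerivAt_G x (hx0.trans_le ht.1)
          (lt_of_le_of_lt ht.2 hb1)).continuousAt.continuousWithinAt
      · intro t ht
        rw [interior_Icc] at ht
        have ht0 : 0 < t := hx0.trans ht.1
        have ht1 : t < 1 := ht.2.trans hb1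
        rw [(hasDerivAt_G x ht0 ht1).deriv]
        rw [sub_pos, div_lt_div_iff₀ ht0 (by linarith)]
        nlinarith [ht.1]
    have hh := hmono ⟨hxp, hpb⟩ ⟨hxp.trans hpb, le_refl b⟩ h
    rw [show Kf x p = G p from Kf_eq hx0 hx1 hp0 hp1,
      show Kf x b = G b from Kf_eq hx0 hx1 hb0 hb1]
    exact hh.le

lemma Kf_symm (x t : ℝ) : Kf (1 - x) (1 - t) = Kf x t := by
  unfold Kf
  simp only [sub_sub_cancel]
  ring

lemma Kf_anti_left_arg {y x b : ℝ} (hy0 : 0 < y) (hyx : y < x) (hxb : x ≤ b) (hb1 : b < 1) :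
    Kf x b ≤ Kf y b := by
  have hb0 : 0 < b := hy0.trans (hyx.trans_le hxb)
  set H := fun z : ℝ => (z * Real.log z + (1 - z) * Real.log (1 - z))
    - (z * Real.log b + (1 - z) * Real.log (1 - b)) with hH
  have hderiv : ∀ z : ℝ, 0 < z → z < 1 → HasDerivAt H
      (Real.log z - Real.log (1 - z) - Real.log b + Real.log (1 - b)) z := by
    intro z hz0 hz1
    have h1 : HasDerivAt (fun z : ℝ => z * Real.log z) (Real.log z + 1) z :=
      Real.hasDerivAt_mul_log hz0.ne'
    have hsub : HasDerivAt (fun z : ℝ => 1 - z) (-1) z := (hasDerivAt_id z).const_sub 1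
    have h2 : HasDerivAt (fun z : ℝ => (1 - z) * Real.log (1 - z))
        ((Real.log (1 - z) + 1) * (-1)) z :=
      (Real.hasDerivAt_mul_log (by linarith : (1:ℝ) - z ≠ 0)).comp z hsub
    have h3 : HasDerivAt (fun z : ℝ => z * Real.log b) (Real.log b) z := by
      simpa using (hasDerivAt_id z).mul_const (Real.log b)
    have h4 : HasDerivAt (fun z : ℝ => (1 - z) * Real.log (1 - b)) (-Real.log (1 - b)) z := by
      simpa using hsub.mul_const (Real.log (1 - b))
    have := ((h1.add h2).sub (h3.add h4))
    refine this.congr_deriv ?_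
    ring
  have hanti : StrictAntiOn H (Set.Icc y x) := by
    apply strictAntiOn_of_deriv_neg (convex_Icc y x)
    · intro z hz
      have hz0 : 0 < z := hy0.trans_le hz.1
      have hz1 : z < 1 := lt_of_le_of_lt (hz.2.trans hxb) hb1
      exact (hderiv z hz0 hz1).continuousAt.continuousWithinAt
    · intro z hz
      rw [interior_Icc] at hz
      have hz0 : 0 < z := hy0.trans hz.1
      have hzb : z < b := lt_of_lt_of_le hz.2 hxb
      have hz1 : z < 1 := hzb.trans hb1
      rw [(hderiv z hz0 hz1).deriv]
      have h1z : 0 < 1 - z := by linarith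
      have h1b : 0 < 1 - b := by linarith
      have : Real.log (z * (1 - b)) < Real.log (b * (1 - z)) := by
        apply Real.log_lt_log (by positivity)
        nlinarith
      rw [Real.log_mul hz0.ne' h1b.ne', Real.log_mul hb0.ne' h1z.ne'] at this
      linarith
  have h := hanti ⟨le_refl y, hyx.le⟩ ⟨hyx.le, le_refl x⟩ hyx
  have hx1 : x < 1 := lt_of_le_of_lt hxb hb1
  rw [show Kf x b = H x from by
      rw [Kf_eq (hy0.trans hyx) hx1.le hb0 hb1],
    show Kf y b = H y from by
      rw [Kf_eq hy0 (hyx.trans hx1).le hb0 hb1]]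
  exact h.le

lemma Kf_contOn {x c d : ℝ} (hc : 0 < c) (hd : d < 1) (hx0 : 0 < x) (hx1 : x ≤ 1) :
    ContinuousOn (Kf x) (Set.Icc c d) := by
  have : ∀ t ∈ Set.Icc c d, Kf x t = (x * Real.log x + (1 - x) * Real.log (1 - x))
      - (x * Real.log t + (1 - x) * Real.log (1 - t)) := fun t ht =>
    Kf_eq hx0 hx1 (hc.trans_le ht.1) (lt_of_le_of_lt ht.2 hd)
  apply ContinuousOn.congr _ this
  intro t ht
  exact (hasDerivAt_G x (hc.trans_le ht.1)
    (lt_of_le_of_lt ht.2 hd)).continuousAt.continuousWithinAt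

lemma exists_a {x s' : ℝ} (hx0 : 0 < x) (hx1 : x < 1) (hs' : 0 < s') :
    ∃ a, 0 < a ∧ a < x ∧ Kf x a = s' := by
  set M := |(1 - x) * Real.log (1 - x)| with hM
  have hM0 : 0 ≤ M := abs_nonneg _
  set t₀ := x * Real.exp (-(s' + M) / x) with ht₀def
  have hexp : Real.exp (-(s' + M) / x) < 1 := by
    apply Real.exp_lt_one_iff.mpr
    have : 0 < s' + M := by linarith
    exact div_neg_of_neg_of_pos (by linarith) hx0
  have ht₀0 : 0 < t₀ := by positivity
  have ht₀x : t₀ < x := by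
    calc t₀ < x * 1 := by
          apply mul_lt_mul_of_pos_left hexp hx0
      _ = x := mul_one x
  have h1x : 0 < 1 - x := by linarith
  have hval : s' ≤ Kf x t₀ := by
    unfold Kf
    have hxdiv : x / t₀ = Real.exp ((s' + M) / x) := by
      rw [ht₀def, div_mul_cancel_left₀ hx0.ne', ← Real.exp_neg, neg_div, neg_neg]
    have hfirst : x * Real.log (x / t₀) = s' + M := by
      rw [hxdiv, Real.log_exp, mul_div_cancel₀ _ hx0.ne']
    have hsecond : (1 - x) * Real.log ((1 - x) / (1 - t₀)) ≥ -M := by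
      have h1t : 0 < 1 - t₀ := by nlinarith
      have h1t1 : 1 - t₀ ≤ 1 := by linarith
      have hge : (1 - x) ≤ (1 - x) / (1 - t₀) := by
        rw [le_div_iff₀ h1t]
        nlinarith
      have hlog : Real.log (1 - x) ≤ Real.log ((1 - x) / (1 - t₀)) :=
        Real.log_le_log h1x hge
      have : (1 - x) * Real.log (1 - x) ≤ (1 - x) * Real.log ((1 - x) / (1 - t₀)) :=
        mul_le_mul_of_nonneg_left hlog h1x.le
      have habs : -M ≤ (1 - x) * Real.log (1 - x) := neg_abs_le _
      linarith
    linarith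
  have hcont : ContinuousOn (Kf x) (Set.Icc t₀ x) := Kf_contOn ht₀0 hx1 hx0 hx1.le
  have hmem : s' ∈ Set.Icc (Kf x x) (Kf x t₀) := by
    rw [Kf_self hx0 hx1]
    exact ⟨hs'.le, hval⟩
  obtain ⟨a, hamem, haK⟩ := intermediate_value_Icc' ht₀x.le hcont hmem
  refine ⟨a, ht₀0.trans_le hamem.1, lt_of_le_of_ne hamem.2 ?_, haK⟩
  intro hax
  rw [hax, Kf_self hx0 hx1] at haK
  exact hs'.ne' haK.symm

lemma exists_b {x s' : ℝ} (hx0 : 0 < x) (hx1 : x < 1) (hs' : 0 < s') :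
    ∃ b, x < b ∧ b < 1 ∧ Kf x b = s' := by
  obtain ⟨a, ha0, hax, haK⟩ := exists_a (x := 1 - x) (by linarith) (by linarith) hs'
  refine ⟨1 - a, by linarith, by linarith, ?_⟩
  rw [← Kf_symm x (1 - a)]
  simpa using haK

lemma sInf_facts {n j : ℕ} (hn : 0 < n) (hj1 : 1 ≤ j) (hjn : j ≤ n) (u : Fin n → ℝ)
    (hu : ∀ i, 0 < u i ∧ u i ≤ 1) :
    0 < sInf {x : ℝ | j ≤ (univ.filter fun i => u i ≤ x).card} ∧
    (∀ t, sInf {x : ℝ | j ≤ (univ.filter fun i => u i ≤ x).card} ≤ t →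
        j ≤ (univ.filter fun i => u i ≤ t).card) ∧
    (∀ t, j ≤ (univ.filter fun i => u i ≤ t).card →
        sInf {x : ℝ | j ≤ (univ.filter fun i => u i ≤ x).card} ≤ t) := by
  classical
  set S := {x : ℝ | j ≤ (univ.filter fun i => u i ≤ x).card} with hS
  have h1S : (1:ℝ) ∈ S := by
    show j ≤ _
    have heq : (univ.filter fun i => u i ≤ (1:ℝ)) = univ :=
      filter_true_of_mem (fun i _ => (hu i).2)
    rw [heq, card_univ, Fintype.card_fin]
    exact hjn
  have hSne : S.Nonempty := ⟨1, h1S⟩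
  have huniv_ne : (univ : Finset (Fin n)).Nonempty := ⟨⟨0, hn⟩, mem_univ _⟩
  set m := (univ.image u).min' (huniv_ne.image u) with hm
  have hlb : ∀ x ∈ S, m ≤ x := by
    intro x hx
    have hcard : 0 < (univ.filter fun i => u i ≤ x).card := lt_of_lt_of_le hj1 hx
    obtain ⟨i, hi⟩ := card_pos.mp hcard
    rw [mem_filter] at hi
    exact le_trans (min'_le _ _ (mem_image_of_mem u (mem_univ i))) hi.2
  have hbdd : BddBelow S := ⟨m, hlb⟩
  have hm0 : 0 < m := by
    obtain ⟨i, _, hi⟩ := mem_image.mp ((univ.image u).min'_mem (huniv_ne.image u))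
    rw [hm, ← hi]
    exact (hu i).1
  refine ⟨lt_of_lt_of_le hm0 (le_csInf hSne hlb), ?_, fun t ht => csInf_le hbdd ht⟩
  intro t ht
  by_contra hc
  push_neg at hc
  set T := univ.filter fun i => t < u i with hT
  have hTne : T.Nonempty := by
    rw [Finset.filter_nonempty_iff]
    by_contra hT'
    push_neg at hT'
    have heq : (univ.filter fun i => u i ≤ t) = univ := by
      apply filter_true_of_mem
      intro i _
      exact hT' i (mem_univ i)
    rw [heq, card_univ, Fintype.card_fin] at hc
    exact absurd hjn (not_le.mpr hc)
  set δ := (T.image u).min' (hTne.image u) with hδdef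
  have hδ : t < δ := by
    obtain ⟨i, hiT, hi⟩ := mem_image.mp ((T.image u).min'_mem (hTne.image u))
    rw [hδdef, ← hi]
    exact (mem_filter.mp hiT).2
  have hlb2 : ∀ x ∈ S, δ ≤ x := by
    intro x hx
    by_contra hxδ
    push_neg at hxδ
    have hsub : (univ.filter fun i => u i ≤ x) ⊆ (univ.filter fun i => u i ≤ t) := by
      intro i hi
      rw [mem_filter] at hi ⊢
      refine ⟨mem_univ _, ?_⟩
      by_contra h'
      push_neg at h'
      have hiT : i ∈ T := mem_filter.mpr ⟨mem_univ _, h'⟩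
      have : δ ≤ u i := min'_le _ _ (mem_image_of_mem u hiT)
      linarith [hi.2]
    have hcc := card_le_card hsub
    have : j ≤ (univ.filter fun i => u i ≤ t).card := le_trans hx hcc
    exact absurd this (not_le.mpr hc)
  have : δ ≤ sInf S := le_csInf hSne hlb2
  linarith

section Prob

variable {Ω : Type*} [MeasurableSpace Ω] (P : Measure Ω) [IsProbabilityMeasure P]
  {n : ℕ} (U : Fin n → Ω → ℝ)

lemma ind_meas (hmeas : ∀ i, Measurable (U i)) (c : ℝ) (i : Fin n) :
    Measurable (fun ω => if U i ω ≤ c then (1:ℝ) else 0) :=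
  Measurable.ite ((hmeas i) measurableSet_Iic) measurable_const measurable_const

lemma ind_indep (hmeas : ∀ i, Measurable (U i))
    (hindep : iIndepFun U P) (c : ℝ) :
    iIndepFun (fun i ω => if U i ω ≤ c then (1:ℝ) else 0) P :=
  hindep.comp (fun _ (y : ℝ) => if y ≤ c then (1:ℝ) else 0)
    (fun _ => Measurable.ite measurableSet_Iic measurable_const measurable_const)

lemma prob_le (hmeas : ∀ i, Measurable (U i))
    (hunif : ∀ i, Measure.map (U i) P = volume.restrict (Set.Ioc (0:ℝ) 1))
    {c : ℝ} (hc0 : 0 ≤ c) (hc1 : c ≤ 1) (i : Fin n) :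
    P ((U i) ⁻¹' (Set.Iic c)) = ENNReal.ofReal c := by
  rw [← Measure.map_apply (hmeas i) measurableSet_Iic, hunif i,
    Measure.restrict_apply measurableSet_Iic]
  have : Set.Iic c ∩ Set.Ioc 0 1 = Set.Ioc 0 c := by
    ext y
    simp only [Set.mem_inter_iff, Set.mem_Iic, Set.mem_Ioc]
    exact ⟨fun ⟨h1, h2, _⟩ => ⟨h2, h1⟩, fun ⟨h1, h2⟩ => ⟨h2, h1, h2.trans hc1⟩⟩
  rw [this, Real.volume_Ioc, sub_zero]

lemma mgf_ind (hmeas : ∀ i, Measurable (U i))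
    (hunif : ∀ i, Measure.map (U i) P = volume.restrict (Set.Ioc (0:ℝ) 1))
    {c : ℝ} (hc0 : 0 ≤ c) (hc1 : c ≤ 1) (l : ℝ) (i : Fin n) :
    mgf (fun ω => if U i ω ≤ c then (1:ℝ) else 0) P l = 1 + c * (Real.exp l - 1) := by
  have hpt : (fun ω => Real.exp (l * (if U i ω ≤ c then (1:ℝ) else 0)))
      = fun ω => (Real.exp l - 1) * Set.indicator ((U i) ⁻¹' (Set.Iic c)) (fun _ => (1:ℝ)) ω
          + 1 := by
    ext ω
    by_cases h : U i ω ≤ c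
    · rw [if_pos h, Set.indicator_of_mem (show ω ∈ (U i) ⁻¹' (Set.Iic c) from h), mul_one]
      ring
    · rw [if_neg h, Set.indicator_of_notMem (show ω ∉ (U i) ⁻¹' (Set.Iic c) from h),
        mul_zero, mul_zero, Real.exp_zero, zero_add]
  have hms : MeasurableSet ((U i) ⁻¹' (Set.Iic c)) := (hmeas i) measurableSet_Iic
  rw [mgf, hpt]
  rw [integral_add (((integrable_const (1:ℝ)).indicator hms).const_mul _) (integrable_const 1)]
  rw [integral_const_mul, integral_indicator_const (1:ℝ) hms, integral_const]
  simp only [smul_eq_mul, measure_univ, ENNReal.toReal_one, one_mul, mul_one, probReal_univ]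
  rw [measureReal_def, prob_le P U hmeas hunif hc0 hc1 i, ENNReal.toReal_ofReal hc0]
  ring

lemma mgf_sum_ind (hmeas : ∀ i, Measurable (U i))
    (hindep : iIndepFun U P)
    (hunif : ∀ i, Measure.map (U i) P = volume.restrict (Set.Ioc (0:ℝ) 1))
    {c : ℝ} (hc0 : 0 ≤ c) (hc1 : c ≤ 1) (l : ℝ) :
    mgf (fun ω => ∑ i, if U i ω ≤ c then (1:ℝ) else 0) P l
      = (1 + c * (Real.exp l - 1)) ^ n := by
  have heq : (fun ω => ∑ i, if U i ω ≤ c then (1:ℝ) else 0)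
      = ∑ i, (fun ω => if U i ω ≤ c then (1:ℝ) else 0) := by
    ext ω
    rw [Finset.sum_apply]
  rw [heq, (ind_indep P U hmeas hindep c).mgf_sum (ind_meas U hmeas c) univ]
  rw [Finset.prod_congr rfl (fun i _ => mgf_ind P U hmeas hunif hc0 hc1 l i),
    Finset.prod_const, card_univ, Fintype.card_fin]

lemma integrable_exp_sum_ind (hmeas : ∀ i, Measurable (U i)) (c l : ℝ) :
    Integrable (fun ω => Real.exp (l * ∑ i, if U i ω ≤ c then (1:ℝ) else 0)) P := by
  apply Integrable.mono' (integrable_const (Real.exp (|l| * n)))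
  · apply Measurable.aestronglyMeasurable
    exact ((Finset.measurable_sum univ (fun i _ => ind_meas U hmeas c i)).const_mul l).exp
  · apply ae_of_all
    intro ω
    rw [Real.norm_eq_abs, Real.abs_exp, Real.exp_le_exp]
    have h0 : 0 ≤ ∑ i, if U i ω ≤ c then (1:ℝ) else 0 :=
      Finset.sum_nonneg (fun i _ => by positivity)
    have h1 : (∑ i, if U i ω ≤ c then (1:ℝ) else 0) ≤ n := by
      calc (∑ i, if U i ω ≤ c then (1:ℝ) else 0) ≤ ∑ _i : Fin n, (1:ℝ) :=
            Finset.sum_le_sum (fun i _ => by split <;> norm_num)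
        _ = n := by rw [Finset.sum_const, card_univ, Fintype.card_fin, nsmul_eq_mul, mul_one]
    calc l * (∑ i, if U i ω ≤ c then (1:ℝ) else 0)
        ≤ |l * (∑ i, if U i ω ≤ c then (1:ℝ) else 0)| := le_abs_self _
      _ = |l| * |(∑ i, if U i ω ≤ c then (1:ℝ) else 0)| := abs_mul _ _
      _ ≤ |l| * n := by
          apply mul_le_mul_of_nonneg_left _ (abs_nonneg l)
          rwa [abs_of_nonneg h0]

lemma chernoff_upper (hmeas : ∀ i, Measurable (U i))
    (hindep : iIndepFun U P)
    (hunif : ∀ i, Measure.map (U i) P = volume.restrict (Set.Ioc (0:ℝ) 1))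
    {c : ℝ} (hc0 : 0 ≤ c) (hc1 : c ≤ 1) {l : ℝ} (hl : 0 ≤ l) (ε : ℝ) :
    (P {ω | ε ≤ ∑ i, if U i ω ≤ c then (1:ℝ) else 0}).toReal
      ≤ Real.exp (-l * ε) * (1 + c * (Real.exp l - 1)) ^ n := by
  rw [← mgf_sum_ind P U hmeas hindep hunif hc0 hc1 l]
  exact measure_ge_le_exp_mul_mgf ε hl (integrable_exp_sum_ind P U hmeas c l)

lemma chernoff_lower (hmeas : ∀ i, Measurable (U i))
    (hindep : iIndepFun U P)
    (hunif : ∀ i, Measure.map (U i) P = volume.restrict (Set.Ioc (0:ℝ) 1))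
    {c : ℝ} (hc0 : 0 ≤ c) (hc1 : c ≤ 1) {l : ℝ} (hl : l ≤ 0) (ε : ℝ) :
    (P {ω | (∑ i, if U i ω ≤ c then (1:ℝ) else 0) ≤ ε}).toReal
      ≤ Real.exp (-l * ε) * (1 + c * (Real.exp l - 1)) ^ n := by
  rw [← mgf_sum_ind P U hmeas hindep hunif hc0 hc1 l]
  exact measure_le_le_exp_mul_mgf ε hl (integrable_exp_sum_ind P U hmeas c l)

end Prob

lemma opt_val (n : ℕ) {x t : ℝ} (hx0 : 0 < x) (hx1 : x < 1) (ht0 : 0 < t) (ht1 : t < 1) :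
    Real.exp (-(Real.log (x * (1 - t) / (t * (1 - x)))) * ((n:ℝ) * x))
        * (1 + t * (Real.exp (Real.log (x * (1 - t) / (t * (1 - x)))) - 1)) ^ n
      = Real.exp (-((n:ℝ) * Kf x t)) := by
  have h1x : 0 < 1 - x := by linarith
  have h1t : 0 < 1 - t := by linarith
  have harg : 0 < x * (1 - t) / (t * (1 - x)) := div_pos (by positivity) (by positivity)
  rw [Real.exp_log harg]
  have hbase : 1 + t * (x * (1 - t) / (t * (1 - x)) - 1) = (1 - t) / (1 - x) := by
    field_simp
    ring
  rw [hbase]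
  have hb : (0:ℝ) < (1 - t) / (1 - x) := div_pos h1t h1x
  rw [show ((1 - t) / (1 - x)) ^ n = Real.exp ((n:ℝ) * Real.log ((1 - t) / (1 - x))) by
    rw [Real.exp_nat_mul, Real.exp_log hb]]
  rw [← Real.exp_add]
  congr 1
  have hlog1 : Real.log (x * (1 - t) / (t * (1 - x)))
      = Real.log x + Real.log (1 - t) - (Real.log t + Real.log (1 - x)) := by
    have hnum : (0:ℝ) < x * (1 - t) := by positivity
    have hden : (0:ℝ) < t * (1 - x) := by positivity
    rw [Real.log_div hnum.ne' hden.ne',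
      Real.log_mul hx0.ne' h1t.ne', Real.log_mul ht0.ne' h1x.ne']
  have hlog2 : Real.log ((1 - t) / (1 - x)) = Real.log (1 - t) - Real.log (1 - x) :=
    Real.log_div h1t.ne' h1x.ne'
  have hKf : Kf x t = (x * Real.log x + (1 - x) * Real.log (1 - x))
      - (x * Real.log t + (1 - x) * Real.log (1 - t)) := Kf_eq hx0 hx1.le ht0 ht1
  rw [hlog1, hlog2, hKf]
  ring

section Tails

variable {Ω : Type*} [MeasurableSpace Ω] (P : Measure Ω) [IsProbabilityMeasure P]
  {n : ℕ} (U : Fin n → Ω → ℝ)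

lemma tail_up (hmeas : ∀ i, Measurable (U i))
    (hindep : iIndepFun U P)
    (hunif : ∀ i, Measure.map (U i) P = volume.restrict (Set.Ioc (0:ℝ) 1))
    {j : ℕ} (hj1 : 1 ≤ j) (hjn : j < n) {a : ℝ} (ha0 : 0 < a) (hax : a < (j:ℝ)/(n:ℝ)) :
    (P {ω | (j:ℝ) ≤ ∑ i, if U i ω ≤ a then (1:ℝ) else 0}).toReal
      ≤ Real.exp (-((n:ℝ) * Kf ((j:ℝ)/(n:ℝ)) a)) := by
  have hn0 : (0:ℝ) < n := by
    have : 0 < n := lt_of_le_of_lt (Nat.zero_le j) hjn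
    exact_mod_cast this
  set x := (j:ℝ)/(n:ℝ) with hxdef
  have hx0 : 0 < x := div_pos (by exact_mod_cast hj1) hn0
  have hx1 : x < 1 := by
    rw [hxdef, div_lt_one hn0]
    exact_mod_cast hjn
  have ha1 : a < 1 := hax.trans hx1
  have h1x : 0 < 1 - x := by linarith
  set l := Real.log (x * (1 - a) / (a * (1 - x))) with hldef
  have hl : 0 ≤ l := by
    apply Real.log_nonneg
    rw [le_div_iff₀ (by positivity)]
    nlinarith
  have hjx : (j:ℝ) = (n:ℝ) * x := by
    rw [hxdef, mul_div_cancel₀ _ hn0.ne']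
  calc (P {ω | (j:ℝ) ≤ ∑ i, if U i ω ≤ a then (1:ℝ) else 0}).toReal
      ≤ Real.exp (-l * (j:ℝ)) * (1 + a * (Real.exp l - 1)) ^ n :=
        chernoff_upper P U hmeas hindep hunif ha0.le ha1.le hl (j:ℝ)
    _ = Real.exp (-((n:ℝ) * Kf x a)) := by
        rw [hjx, hldef]
        exact opt_val n hx0 hx1 ha0 ha1

lemma tail_low (hmeas : ∀ i, Measurable (U i))
    (hindep : iIndepFun U P)
    (hunif : ∀ i, Measure.map (U i) P = volume.restrict (Set.Ioc (0:ℝ) 1))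
    {j : ℕ} (hj2 : 2 ≤ j) (hjn : j ≤ n) {b : ℝ}
    (hyb : ((j:ℝ) - 1)/(n:ℝ) < b) (hb1 : b < 1) :
    (P {ω | (∑ i, if U i ω ≤ b then (1:ℝ) else 0) ≤ (j:ℝ) - 1}).toReal
      ≤ Real.exp (-((n:ℝ) * Kf (((j:ℝ) - 1)/(n:ℝ)) b)) := by
  have hn0 : (0:ℝ) < n := by
    have : 0 < n := lt_of_lt_of_le (by omega : 0 < j) hjn
    exact_mod_cast this
  have hj1' : (1:ℝ) ≤ (j:ℝ) - 1 := by
    have : (2:ℝ) ≤ j := by exact_mod_cast hj2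
    linarith
  set y := ((j:ℝ) - 1)/(n:ℝ) with hydef
  have hy0 : 0 < y := div_pos (by linarith) hn0
  have hy1 : y < 1 := lt_of_lt_of_le (hyb.trans_le hb1.le) (le_refl 1)
  have hb0 : 0 < b := hy0.trans hyb
  have h1y : 0 < 1 - y := by linarith
  set l := Real.log (y * (1 - b) / (b * (1 - y))) with hldef
  have hl : l ≤ 0 := by
    have h1b : (0:ℝ) < 1 - b := by linarith
    apply Real.log_nonpos
    · exact (div_nonneg (mul_pos hy0 h1b).le (by positivity))
    · rw [div_le_one (by positivity)]
      nlinarith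
  have hjy : (j:ℝ) - 1 = (n:ℝ) * y := by
    rw [hydef, mul_div_cancel₀ _ hn0.ne']
  calc (P {ω | (∑ i, if U i ω ≤ b then (1:ℝ) else 0) ≤ (j:ℝ) - 1}).toReal
      ≤ Real.exp (-l * ((j:ℝ) - 1)) * (1 + b * (Real.exp l - 1)) ^ n :=
        chernoff_lower P U hmeas hindep hunif hb0.le hb1.le hl ((j:ℝ) - 1)
    _ = Real.exp (-((n:ℝ) * Kf y b)) := by
        rw [hjy, hldef]
        exact opt_val n hy0 hy1 hb0 hb1

end Tails

lemma final_ineq {j : ℕ} (hj2 : 2 ≤ j) {s : ℝ} (hs : 0 < s) :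
    2 * Real.exp (-s) ≤ Real.exp 1 * Real.sqrt 2 * (j:ℝ) * Real.exp (-(1 - 1/(j:ℝ)) * s) := by
  have hj0 : (0:ℝ) < j := by exact_mod_cast lt_of_lt_of_le (by norm_num) hj2
  have hj : (2:ℝ) ≤ (j:ℝ) := by exact_mod_cast hj2
  have h1 : Real.exp (-s) ≤ Real.exp (-(1 - 1/(j:ℝ)) * s) := by
    apply Real.exp_le_exp.mpr
    have h2 : 0 < (1/(j:ℝ)) * s := by positivity
    nlinarith
  have he : (1:ℝ) ≤ Real.exp 1 := by
    have := Real.add_one_le_exp (1:ℝ)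
    linarith
  have hsq : (1:ℝ) ≤ Real.sqrt 2 := by
    rw [show (1:ℝ) = Real.sqrt 1 from (Real.sqrt_one).symm]
    exact Real.sqrt_le_sqrt (by norm_num)
  have hes : (1:ℝ) ≤ Real.exp 1 * Real.sqrt 2 := by nlinarith
  have h2 : (2:ℝ) ≤ Real.exp 1 * Real.sqrt 2 * (j:ℝ) :=
    calc (2:ℝ) ≤ (j:ℝ) := hj
      _ = 1 * (j:ℝ) := (one_mul _).symm
      _ ≤ (Real.exp 1 * Real.sqrt 2) * (j:ℝ) := mul_le_mul_of_nonneg_right hes hj0.le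
  calc 2 * Real.exp (-s) ≤ (Real.exp 1 * Real.sqrt 2 * (j:ℝ)) * Real.exp (-(1 - 1/(j:ℝ)) * s) :=
        mul_le_mul h2 h1 (Real.exp_nonneg _) (by positivity)

/-- Let `p₍ⱼ₎` be the `j`-th order statistic of `n > 2` i.i.d. `Uniform(0,1)` random
variables, `2 ≤ j ≤ n`, and `K(x,t) = x log(x/t) + (1-x) log((1-x)/(1-t))`. Then for
every `s > 0`, `P(n K(j/n, p₍ⱼ₎) > s) ≤ e √2 j e^{-(1-1/j)s}`. -/
theorem stmt_6 {Ω : Type*} [MeasurableSpace Ω] (P : Measure Ω) [IsProbabilityMeasure P]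
    (n : ℕ) (hn : 2 < n) (U : Fin n → Ω → ℝ)
    (hmeas : ∀ i, Measurable (U i))
    (hindep : iIndepFun U P)
    (hunif : ∀ i, Measure.map (U i) P = volume.restrict (Set.Ioc (0:ℝ) 1))
    (K : ℝ → ℝ → ℝ)
    (hK : ∀ x t, K x t = x * Real.log (x / t) + (1 - x) * Real.log ((1 - x) / (1 - t)))
    (j : ℕ) (hj2 : 2 ≤ j) (hjn : j ≤ n) (s : ℝ) (hs : 0 < s) :
    P {ω | (n : ℝ) * K ((j : ℝ) / n)
          (sInf {x : ℝ | j ≤ (univ.filter fun i : Fin n => U i ω ≤ x).card}) > s}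
      ≤ ENNReal.ofReal (Real.exp 1 * Real.sqrt 2 * j * Real.exp (-(1 - 1 / (j : ℝ)) * s)) := by
  have hKf : ∀ x t, K x t = Kf x t := hK
  have hGc0 : P (⋃ i, {ω | U i ω ∉ Set.Ioc (0:ℝ) 1}) = 0 := by
    apply measure_iUnion_null
    intro i
    have heq : {ω | U i ω ∉ Set.Ioc (0:ℝ) 1} = (U i) ⁻¹' (Set.Ioc (0:ℝ) 1)ᶜ := rfl
    rw [heq, ← Measure.map_apply (hmeas i) measurableSet_Ioc.compl, hunif i,
      Measure.restrict_apply measurableSet_Ioc.compl, Set.compl_inter_self]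
    exact measure_empty
  rcases eq_or_lt_of_le hjn with hjeq | hjlt
  · -- case j = n
    subst hjeq
    have hj0' : (0:ℝ) < (j:ℝ) := by exact_mod_cast (by omega : 0 < j)
    set a := Real.exp (-(s/(j:ℝ))) with hadef
    have ha0 : 0 < a := Real.exp_pos _
    have ha1 : a < 1 := Real.exp_lt_one_iff.mpr (by
      apply neg_neg_iff_pos.mpr
      positivity)
    have hsub : {ω | (j:ℝ) * K ((j:ℝ)/(j:ℝ))
          (sInf {x : ℝ | j ≤ (univ.filter fun i : Fin j => U i ω ≤ x).card}) > s}
        ⊆ (⋂ i, (U i) ⁻¹' (Set.Iic a)) ∪ (⋃ i, {ω | U i ω ∉ Set.Ioc (0:ℝ) 1}) := by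
      intro ω hω
      by_cases hg : ∀ i, U i ω ∈ Set.Ioc (0:ℝ) 1
      · left
        obtain ⟨hp0, key1, key2⟩ := sInf_facts (by omega) (by omega) (le_refl j)
          (fun i => U i ω) (fun i => ⟨(hg i).1, (hg i).2⟩)
        simp only [Set.mem_setOf_eq, gt_iff_lt] at hω
        rw [hKf, div_self hj0'.ne'] at hω
        rw [Kf_one hp0] at hω
        have hlog : Real.log (sInf {x : ℝ | j ≤ (univ.filter
            fun i : Fin j => U i ω ≤ x).card}) < -(s/(j:ℝ)) := by
          have h2 : s / (j:ℝ) < -Real.log (sInf {x : ℝ | j ≤ (univ.filter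
              fun i : Fin j => U i ω ≤ x).card}) := by
            rw [div_lt_iff₀ hj0']
            linarith
          linarith
        have hpa : sInf {x : ℝ | j ≤ (univ.filter fun i : Fin j => U i ω ≤ x).card} ≤ a := by
          calc sInf {x : ℝ | j ≤ (univ.filter fun i : Fin j => U i ω ≤ x).card}
              = Real.exp (Real.log (sInf {x : ℝ | j ≤ (univ.filter
                  fun i : Fin j => U i ω ≤ x).card})) := (Real.exp_log hp0).symm
            _ ≤ Real.exp (-(s/(j:ℝ))) := Real.exp_le_exp.mpr hlog.le
        have hcard := key1 a hpa
        have hall : ∀ i, U i ω ≤ a := by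
          have heq : (univ.filter fun i => U i ω ≤ a) = univ := by
            apply Finset.eq_univ_of_card
            have hle := Finset.card_filter_le (univ : Finset (Fin j)) (fun i => U i ω ≤ a)
            rw [card_univ, Fintype.card_fin] at hle
            rw [Fintype.card_fin]
            omega
          intro i
          have hi : i ∈ univ.filter fun i => U i ω ≤ a := by rw [heq]; exact mem_univ i
          exact (mem_filter.mp hi).2
        exact Set.mem_iInter.mpr fun i => hall i
      · right
        push_neg at hg
        obtain ⟨i, hi⟩ := hg
        exact Set.mem_iUnion.mpr ⟨i, hi⟩
    have hPA : P (⋂ i, (U i) ⁻¹' (Set.Iic a)) = ENNReal.ofReal (Real.exp (-s)) := by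
      rw [hindep.meas_iInter (fun i => ⟨Set.Iic a, measurableSet_Iic, rfl⟩)]
      rw [Finset.prod_congr rfl (fun i _ => prob_le P U hmeas hunif ha0.le ha1.le i),
        Finset.prod_const, card_univ, Fintype.card_fin, ← ENNReal.ofReal_pow ha0.le]
      congr 1
      rw [hadef, ← Real.exp_nat_mul]
      congr 1
      field_simp
    calc P {ω | (j:ℝ) * K ((j:ℝ)/(j:ℝ))
          (sInf {x : ℝ | j ≤ (univ.filter fun i : Fin j => U i ω ≤ x).card}) > s}
        ≤ P ((⋂ i, (U i) ⁻¹' (Set.Iic a)) ∪ (⋃ i, {ω | U i ω ∉ Set.Ioc (0:ℝ) 1})) :=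
          measure_mono hsub
      _ ≤ P (⋂ i, (U i) ⁻¹' (Set.Iic a)) + P (⋃ i, {ω | U i ω ∉ Set.Ioc (0:ℝ) 1}) :=
          measure_union_le _ _
      _ = ENNReal.ofReal (Real.exp (-s)) := by rw [hPA, hGc0, add_zero]
      _ ≤ ENNReal.ofReal (Real.exp 1 * Real.sqrt 2 * j * Real.exp (-(1 - 1 / (j : ℝ)) * s)) := by
          apply ENNReal.ofReal_le_ofReal
          have := final_ineq hj2 hs
          have hpos := Real.exp_pos (-s)
          linarith
  · -- case j < n
    have hn0' : (0:ℝ) < (n:ℝ) := by exact_mod_cast (by omega : 0 < n)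
    have hj0' : (0:ℝ) < (j:ℝ) := by exact_mod_cast (by omega : 0 < j)
    set x := (j:ℝ)/(n:ℝ) with hxdef
    have hx0 : 0 < x := div_pos hj0' hn0'
    have hx1 : x < 1 := by
      rw [hxdef, div_lt_one hn0']
      exact_mod_cast hjlt
    have hsn : 0 < s / (n:ℝ) := div_pos hs hn0'
    obtain ⟨a, ha0, hax, haK⟩ := exists_a hx0 hx1 hsn
    obtain ⟨b, hxb, hb1, hbK⟩ := exists_b hx0 hx1 hsn
    set A := {ω : Ω | (j:ℝ) ≤ ∑ i, if U i ω ≤ a then (1:ℝ) else 0} with hAdef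
    set B := {ω : Ω | (∑ i, if U i ω ≤ b then (1:ℝ) else 0) ≤ (j:ℝ) - 1} with hBdef
    have hsub : {ω | (n:ℝ) * K ((j:ℝ)/(n:ℝ))
          (sInf {x : ℝ | j ≤ (univ.filter fun i : Fin n => U i ω ≤ x).card}) > s}
        ⊆ (A ∪ B) ∪ (⋃ i, {ω | U i ω ∉ Set.Ioc (0:ℝ) 1}) := by
      intro ω hω
      by_cases hg : ∀ i, U i ω ∈ Set.Ioc (0:ℝ) 1
      · left
        obtain ⟨hp0, key1, key2⟩ := sInf_facts (by omega) (by omega) hjn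
          (fun i => U i ω) (fun i => ⟨(hg i).1, (hg i).2⟩)
        simp only [Set.mem_setOf_eq, gt_iff_lt] at hω
        rw [hKf] at hω
        set p := sInf {x : ℝ | j ≤ (univ.filter fun i : Fin n => U i ω ≤ x).card} with hpdef
        have hKp : s / (n:ℝ) < Kf x p := by
          rw [div_lt_iff₀ hn0']
          linarith
        have hcase : p ≤ a ∨ b < p := by
          by_contra hcon
          push_neg at hcon
          obtain ⟨hap, hpb⟩ := hcon
          rcases le_or_gt p x with hpx | hxp
          · have hlt := Kf_lt_left hx1.le ha0 hap hpx
            rw [haK] at hlt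
            linarith
          · have hle := Kf_le_right hx0 hxp.le hpb hb1
            rw [hbK] at hle
            linarith
        rcases hcase with hpa | hbp
        · left
          show (j:ℝ) ≤ ∑ i, if U i ω ≤ a then (1:ℝ) else 0
          rw [Finset.sum_boole]
          exact_mod_cast key1 a hpa
        · right
          show (∑ i, if U i ω ≤ b then (1:ℝ) else 0) ≤ (j:ℝ) - 1
          have hcard : (univ.filter fun i => U i ω ≤ b).card < j := by
            by_contra hc
            push_neg at hc
            exact absurd (key2 b hc) (not_le.mpr hbp)
          rw [Finset.sum_boole]
          have : ((univ.filter fun i => U i ω ≤ b).card : ℝ) + 1 ≤ (j:ℝ) := by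
            exact_mod_cast hcard
          linarith
      · right
        push_neg at hg
        obtain ⟨i, hi⟩ := hg
        exact Set.mem_iUnion.mpr ⟨i, hi⟩
    have hPA : P A ≤ ENNReal.ofReal (Real.exp (-s)) := by
      rw [ENNReal.le_ofReal_iff_toReal_le (measure_ne_top P A) (Real.exp_nonneg _)]
      calc (P A).toReal ≤ Real.exp (-((n:ℝ) * Kf x a)) :=
            tail_up P U hmeas hindep hunif (by omega) hjlt ha0 hax
        _ = Real.exp (-s) := by
            rw [haK, mul_div_cancel₀ _ hn0'.ne']
    have hPB : P B ≤ ENNReal.ofReal (Real.exp (-s)) := by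
      rw [ENNReal.le_ofReal_iff_toReal_le (measure_ne_top P B) (Real.exp_nonneg _)]
      have hyx : ((j:ℝ) - 1)/(n:ℝ) < x := by
        rw [hxdef, div_lt_div_iff₀ hn0' hn0']
        nlinarith
      calc (P B).toReal ≤ Real.exp (-((n:ℝ) * Kf (((j:ℝ) - 1)/(n:ℝ)) b)) :=
            tail_low P U hmeas hindep hunif hj2 hjn (hyx.trans hxb) hb1
        _ ≤ Real.exp (-s) := by
            apply Real.exp_le_exp.mpr
            have hy0 : 0 < ((j:ℝ) - 1)/(n:ℝ) := by
              apply div_pos _ hn0'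
              have : (2:ℝ) ≤ (j:ℝ) := by exact_mod_cast hj2
              linarith
            have hanti := Kf_anti_left_arg hy0 hyx hxb.le hb1
            rw [hbK] at hanti
            have : s ≤ (n:ℝ) * Kf (((j:ℝ) - 1)/(n:ℝ)) b := by
              have := mul_le_mul_of_nonneg_left hanti hn0'.le
              rw [mul_div_cancel₀ _ hn0'.ne'] at this
              linarith
            linarith
    calc P {ω | (n:ℝ) * K ((j:ℝ)/(n:ℝ))
          (sInf {x : ℝ | j ≤ (univ.filter fun i : Fin n => U i ω ≤ x).card}) > s}
        ≤ P ((A ∪ B) ∪ (⋃ i, {ω | U i ω ∉ Set.Ioc (0:ℝ) 1})) := measure_mono hsub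
      _ ≤ P (A ∪ B) + P (⋃ i, {ω | U i ω ∉ Set.Ioc (0:ℝ) 1}) := measure_union_le _ _
      _ = P (A ∪ B) := by rw [hGc0, add_zero]
      _ ≤ P A + P B := measure_union_le _ _
      _ ≤ ENNReal.ofReal (Real.exp (-s)) + ENNReal.ofReal (Real.exp (-s)) := add_le_add hPA hPB
      _ = ENNReal.ofReal (2 * Real.exp (-s)) := by
          rw [← ENNReal.ofReal_add (Real.exp_nonneg _) (Real.exp_nonneg _)]
          congr 1
          ring
      _ ≤ ENNReal.ofReal (Real.exp 1 * Real.sqrt 2 * j * Real.exp (-(1 - 1 / (j : ℝ)) * s)) :=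
          ENNReal.ofReal_le_ofReal (final_ineq hj2 hs)
end

section
/- For x, t ∈ (0,1) with x/t ≤ 4, the Bernoulli KL divergence satisfies K(x,t) ≥ (x−t)^2/(9t). -/
/-- For `x, t ∈ (0,1)` with `x/t ≤ 4`, the Bernoulli KL divergence satisfies
`K(x,t) ≥ (x-t)^2/(9t)`. -/
theorem stmt_8 (x t : ℝ) (hx : x ∈ Set.Ioo (0:ℝ) 1) (ht : t ∈ Set.Ioo (0:ℝ) 1)
    (hxt : x / t ≤ 4) :
    x * Real.log (x / t) + (1 - x) * Real.log ((1 - x) / (1 - t)) ≥ (x - t) ^ 2 / (9 * t) := by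
  obtain ⟨hx0, hx1⟩ := hx
  obtain ⟨ht0, ht1⟩ := ht
  set a := Real.sqrt x with hadef
  set b := Real.sqrt t with hbdef
  have ha : 0 < a := Real.sqrt_pos.2 hx0
  have hb : 0 < b := Real.sqrt_pos.2 ht0
  have ha2 : a ^ 2 = x := Real.sq_sqrt hx0.le
  have hb2 : b ^ 2 = t := Real.sq_sqrt ht0.le
  have hx4t : x ≤ 4 * t := by
    rw [div_le_iff₀ ht0] at hxt; linarith
  have hab : a ≤ 2 * b := by
    nlinarith [sq_nonneg (a - 2 * b), sq_nonneg (a + 2 * b)]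
  -- first term bound
  have key1 : x * Real.log (x / t) ≥ 2 * x - 2 * a * b := by
    have h1 : Real.log (b / a) ≤ b / a - 1 :=
      Real.log_le_sub_one_of_pos (div_pos hb ha)
    have h3 : Real.log (b / a) = Real.log b - Real.log a := Real.log_div hb.ne' ha.ne'
    have h2 : Real.log (x / t) = 2 * Real.log a - 2 * Real.log b := by
      rw [Real.log_div hx0.ne' ht0.ne', hadef, hbdef, Real.log_sqrt hx0.le,
        Real.log_sqrt ht0.le]
      ring
    have h4 : Real.log (x / t) ≥ 2 - 2 * (b / a) := by
      rw [h2]; rw [h3] at h1; linarith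
    have h5 : x * (2 - 2 * (b / a)) = 2 * x - 2 * a * b := by
      rw [← ha2]; field_simp
    calc x * Real.log (x / t) ≥ x * (2 - 2 * (b / a)) :=
          mul_le_mul_of_nonneg_left h4 hx0.le
      _ = 2 * x - 2 * a * b := h5
  -- second term bound
  have key2 : (1 - x) * Real.log ((1 - x) / (1 - t)) ≥ t - x := by
    have h1x : (0:ℝ) < 1 - x := by linarith
    have h1t : (0:ℝ) < 1 - t := by linarith
    have h1 : Real.log ((1 - t) / (1 - x)) ≤ (1 - t) / (1 - x) - 1 :=
      Real.log_le_sub_one_of_pos (div_pos h1t h1x)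
    have h2 : Real.log ((1 - x) / (1 - t)) = -Real.log ((1 - t) / (1 - x)) := by
      rw [Real.log_div h1x.ne' h1t.ne', Real.log_div h1t.ne' h1x.ne']; ring
    have h3 : Real.log ((1 - x) / (1 - t)) ≥ 1 - (1 - t) / (1 - x) := by
      rw [h2]; linarith
    have h4 : (1 - x) * (1 - (1 - t) / (1 - x)) = t - x := by
      field_simp; ring
    calc (1 - x) * Real.log ((1 - x) / (1 - t))
        ≥ (1 - x) * (1 - (1 - t) / (1 - x)) := mul_le_mul_of_nonneg_left h3 h1x.le
      _ = t - x := h4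
  -- combine
  have hK : x * Real.log (x / t) + (1 - x) * Real.log ((1 - x) / (1 - t)) ≥ (a - b) ^ 2 := by
    have : (a - b) ^ 2 = (2 * x - 2 * a * b) + (t - x) := by
      rw [← ha2, ← hb2]; ring
    linarith
  have hfinal : (x - t) ^ 2 / (9 * t) ≤ (a - b) ^ 2 := by
    rw [div_le_iff₀ (by positivity)]
    have hxt2 : (x - t) ^ 2 = (a - b) ^ 2 * (a + b) ^ 2 := by
      rw [← ha2, ← hb2]; ring
    rw [hxt2, ← hb2]
    have h9 : (a + b) ^ 2 ≤ 9 * b ^ 2 := by nlinarith [hab, hb.le]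
    exact mul_le_mul_of_nonneg_left h9 (sq_nonneg (a - b))
  linarith
end

section
/- For x, t ∈ (0,1) with x/t ≥ e^2 and x ≤ 1/2, the Bernoulli KL divergence satisfies K(x,t) ≥ (1/2)·x·log(x/t). -/
/-- For `x, t ∈ (0,1)` with `x/t ≥ e^2` and `x ≤ 1/2`, the Bernoulli KL divergence
satisfies `K(x,t) ≥ (1/2) x log(x/t)`. -/
theorem stmt_9 (x t : ℝ) (hx : x ∈ Set.Ioo (0:ℝ) 1) (ht : t ∈ Set.Ioo (0:ℝ) 1)
    (hxt : Real.exp 2 ≤ x / t) (hx2 : x ≤ 1 / 2) :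
    x * Real.log (x / t) + (1 - x) * Real.log ((1 - x) / (1 - t))
      ≥ (1 / 2) * x * Real.log (x / t) := by
  obtain ⟨hx0, hx1⟩ := hx
  obtain ⟨ht0, ht1⟩ := ht
  have hxt0 : 0 < x / t := div_pos hx0 ht0
  have hL : 2 ≤ Real.log (x / t) := (Real.le_log_iff_exp_le hxt0).mpr hxt
  have hexp : (1:ℝ) < Real.exp 2 := by
    have := Real.add_one_le_exp (2:ℝ); linarith
  have htx : t < x := by
    have h1 : 1 < x / t := lt_of_lt_of_le hexp hxt
    exact (one_lt_div ht0).mp h1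
  have h1x : 0 < 1 - x := by linarith
  have h1t : 0 < 1 - t := by linarith
  have hQ : 0 < (1 - t) / (1 - x) := div_pos h1t h1x
  have hlog : Real.log ((1 - t) / (1 - x)) ≤ (x - t) / (1 - x) := by
    have h := Real.log_le_sub_one_of_pos hQ
    have h2 : (1 - t) / (1 - x) - 1 = (x - t) / (1 - x) := by field_simp; ring
    linarith [h2 ▸ h]
  have heq : Real.log ((1 - x) / (1 - t)) = - Real.log ((1 - t) / (1 - x)) := by
    rw [Real.log_div h1x.ne' h1t.ne', Real.log_div h1t.ne' h1x.ne']; ring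
  have h3 : (1 - x) * Real.log ((1 - t) / (1 - x)) ≤ x - t := by
    have := mul_le_mul_of_nonneg_left hlog h1x.le
    rwa [mul_div_cancel₀ _ h1x.ne'] at this
  have h4 : x * 2 ≤ x * Real.log (x / t) := mul_le_mul_of_nonneg_left hL hx0.le
  rw [heq]
  linarith
end

section
/- For every integer n > 2, ((1/n)/(1 − 2^{−1/(n−1)}))^{n/(n−1)} · ((n−1)/n)^n < 9/e. -/
/-- For every integer `n > 2`,
`((1/n)/(1 - 2^{-1/(n-1)}))^{n/(n-1)} · ((n-1)/n)^n < 9/e`. -/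
theorem stmt_17 (n : ℕ) (hn : 2 < n) :
    ((1 / (n : ℝ)) / (1 - 2 ^ (-(1 / ((n : ℝ) - 1))))) ^ ((n : ℝ) / ((n : ℝ) - 1))
        * (((n : ℝ) - 1) / n) ^ (n : ℕ) < 9 / Real.exp 1 := by
  have hN : (3 : ℝ) ≤ (n : ℝ) := by exact_mod_cast hn
  have hN0 : (0 : ℝ) < (n : ℝ) := by linarith
  have hM : (2 : ℝ) ≤ (n : ℝ) - 1 := by linarith
  set x : ℝ := 1 / ((n : ℝ) - 1) with hxdef
  have hx0 : 0 < x := by positivity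
  have hx1 : x ≤ 1 / 2 := by
    rw [hxdef, div_le_div_iff₀ (by linarith) (by norm_num)]; linarith
  have hlog2 : (0.6931471803 : ℝ) < Real.log 2 := Real.log_two_gt_d9
  -- 2^{-x} = exp(-(log 2 * x))
  have h2x : (2 : ℝ) ^ (-x) = Real.exp (Real.log 2 * (-x)) :=
    Real.rpow_def_of_pos (by norm_num) _
  -- denominator lower bound: 1 - 2^{-x} ≥ x/3
  have hexp_ge : 1 + Real.log 2 * x ≤ Real.exp (Real.log 2 * x) := by
    have := Real.add_one_le_exp (Real.log 2 * x); linarith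
  have hpos1 : (0 : ℝ) < 1 + Real.log 2 * x := by nlinarith
  have h2xle : (2 : ℝ) ^ (-x) ≤ 1 / (1 + Real.log 2 * x) := by
    rw [h2x, mul_neg, Real.exp_neg]
    exact one_div_le_one_div_of_le hpos1 hexp_ge |>.trans_eq' (by rw [inv_eq_one_div])
  have hden : x / 3 ≤ 1 - (2 : ℝ) ^ (-x) := by
    have h1 : x / 3 ≤ 1 - 1 / (1 + Real.log 2 * x) := by
      have h2 : 1 / (1 + Real.log 2 * x) ≤ 1 - x / 3 := by
        rw [div_le_iff₀ hpos1]
        have hlog2' : Real.log 2 < 0.6931471808 := Real.log_two_lt_d9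
        have hxx : x * x ≤ x * (1/2) := mul_le_mul_of_nonneg_left hx1 hx0.le
        nlinarith [mul_le_mul_of_nonneg_right hlog2.le hx0.le,
          mul_le_mul_of_nonneg_right hlog2'.le (mul_nonneg hx0.le hx0.le), hxx]
      linarith
    linarith
  have hdenpos : 0 < 1 - (2 : ℝ) ^ (-x) := lt_of_lt_of_le (by positivity) hden
  -- base bound
  set B : ℝ := (1 / (n : ℝ)) / (1 - 2 ^ (-x)) with hBdef
  have hB0 : 0 < B := by positivity
  have hB3 : B ≤ 3 := by
    have h1 : B ≤ (1 / (n : ℝ)) / (x / 3) := by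
      apply div_le_div_of_nonneg_left (by positivity) (by positivity) hden
    have h2 : (1 / (n : ℝ)) / (x / 3) = 3 * ((n : ℝ) - 1) / n := by
      rw [hxdef]; field_simp
    rw [h2] at h1
    have : 3 * ((n : ℝ) - 1) / n ≤ 3 := by
      rw [div_le_iff₀ hN0]; linarith
    linarith
  -- exponent bound
  have he1 : (1 : ℝ) ≤ (n : ℝ) / ((n : ℝ) - 1) := by
    rw [le_div_iff₀ (by linarith)]; linarith
  have he2 : (n : ℝ) / ((n : ℝ) - 1) ≤ 3 / 2 := by
    rw [div_le_div_iff₀ (by linarith) (by norm_num)]; linarith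
  -- first factor bound
  have hF : B ^ ((n : ℝ) / ((n : ℝ) - 1)) < 9 := by
    calc B ^ ((n : ℝ) / ((n : ℝ) - 1)) ≤ (3:ℝ) ^ ((n : ℝ) / ((n : ℝ) - 1)) :=
          Real.rpow_le_rpow hB0.le hB3 (by linarith)
      _ ≤ (3:ℝ) ^ (3/2 : ℝ) :=
          Real.rpow_le_rpow_left_iff (by norm_num) |>.mpr he2
      _ < (3:ℝ) ^ (2 : ℝ) :=
          Real.rpow_lt_rpow_left_iff (by norm_num) |>.mpr (by norm_num)
      _ = 9 := by
          rw [show (2:ℝ) = ((2:ℕ):ℝ) by norm_num, Real.rpow_natCast]; norm_num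
  -- second factor bound
  have hP : (((n : ℝ) - 1) / n) ^ (n : ℕ) < Real.exp (-1) := by
    have h1 : ((n : ℝ) - 1) / n = 1 + (-(1 / (n : ℝ))) := by field_simp; ring
    have h2 : 1 + (-(1 / (n : ℝ))) < Real.exp (-(1 / (n : ℝ))) := by
      have hne : -(1 / (n : ℝ)) ≠ 0 := neg_ne_zero.mpr (by positivity)
      have := Real.add_one_lt_exp hne
      linarith
    have h3 : (((n : ℝ) - 1) / n) ^ (n : ℕ) < (Real.exp (-(1 / (n : ℝ)))) ^ (n : ℕ) := by
      apply pow_lt_pow_left₀ (h1 ▸ h2) _ (by omega)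
      rw [h1]
      have : 1 / (n : ℝ) ≤ 1 / 3 := by
        rw [div_le_div_iff₀ hN0 (by norm_num)]; linarith
      linarith
    have h4 : (Real.exp (-(1 / (n : ℝ)))) ^ (n : ℕ) = Real.exp (-1) := by
      rw [← Real.exp_nat_mul]
      congr 1
      field_simp
    linarith [h3, h4 ▸ h3]
  have hPnn : (0:ℝ) ≤ (((n : ℝ) - 1) / n) ^ (n : ℕ) := by positivity
  have hFpos : 0 < B ^ ((n : ℝ) / ((n : ℝ) - 1)) := Real.rpow_pos_of_pos hB0 _
  have hexp1 : 0 < Real.exp (-1) := Real.exp_pos _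
  calc B ^ ((n : ℝ) / ((n : ℝ) - 1)) * (((n : ℝ) - 1) / n) ^ (n : ℕ)
      < 9 * Real.exp (-1) := by nlinarith
    _ = 9 / Real.exp 1 := by rw [Real.exp_neg]; ring
end
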